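/- arXiv:2003.01209 — 4 statements merged into one kernel-verified Lean document; each statement's English description precedes it below -/
import Mathlib

section
/- For α, β > -1 and n ≥ 0, the log orthogonal function S_n^{(α,β)} satisfies the Sturm–Liouville equation: (-log t)^{-α} · t^{-β} · d/dt[ (-log t)^{α+1} · t^{β+2} · d/dt S_n^{(α,β)}(t) ] + n·(β+1)·S_n^{(α,β)}(t) = 0 for all t ∈ (0,1). -/
open MeasureTheory Real Set

/-- Generalized Laguerre polynomials via the three-term recurrence. -/
noncomputable def lag (α : ℝ) : ℕ → ℝ → ℝ
  | 0, _ => 1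
  | 1, y => -y + α + 1
  | n+2, y => ((2*((n:ℝ)+1)+α+1-y) * lag α (n+1) y - ((n:ℝ)+1+α) * lag α n y) / ((n:ℝ)+2)

/-- Log orthogonal functions `S_n^{(α,β)}(t) = L_n^{(α)}(-(β+1) log t)`. -/
noncomputable def LOF (α β : ℝ) (n : ℕ) (t : ℝ) : ℝ :=
  lag α n (-(β+1) * Real.log t)

noncomputable def lagD (α : ℝ) : ℕ → ℝ → ℝ
  | 0, _ => 0
  | 1, _ => -1
  | n+2, y => ((2*((n:ℝ)+1)+α+1-y) * lagD α (n+1) y - lag α (n+1) y - ((n:ℝ)+1+α) * lagD α n y) / ((n:ℝ)+2)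

noncomputable def lagDD (α : ℝ) : ℕ → ℝ → ℝ
  | 0, _ => 0
  | 1, _ => 0
  | n+2, y => ((2*((n:ℝ)+1)+α+1-y) * lagDD α (n+1) y - 2 * lagD α (n+1) y - ((n:ℝ)+1+α) * lagDD α n y) / ((n:ℝ)+2)

lemma lag_rec (α : ℝ) (n : ℕ) (y : ℝ) :
    ((n:ℝ)+2) * lag α (n+2) y
      = (2*((n:ℝ)+1)+α+1-y) * lag α (n+1) y - ((n:ℝ)+1+α) * lag α n y := by
  have h : ((n:ℝ)+2) ≠ 0 := by positivity
  rw [show lag α (n+2) y = ((2*((n:ℝ)+1)+α+1-y) * lag α (n+1) y - ((n:ℝ)+1+α) * lag α n y) / ((n:ℝ)+2) from rfl]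
  field_simp

lemma lagD_rec (α : ℝ) (n : ℕ) (y : ℝ) :
    ((n:ℝ)+2) * lagD α (n+2) y
      = (2*((n:ℝ)+1)+α+1-y) * lagD α (n+1) y - lag α (n+1) y - ((n:ℝ)+1+α) * lagD α n y := by
  have h : ((n:ℝ)+2) ≠ 0 := by positivity
  rw [show lagD α (n+2) y = ((2*((n:ℝ)+1)+α+1-y) * lagD α (n+1) y - lag α (n+1) y - ((n:ℝ)+1+α) * lagD α n y) / ((n:ℝ)+2) from rfl]
  field_simp

lemma lagDD_rec (α : ℝ) (n : ℕ) (y : ℝ) :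
    ((n:ℝ)+2) * lagDD α (n+2) y
      = (2*((n:ℝ)+1)+α+1-y) * lagDD α (n+1) y - 2 * lagD α (n+1) y - ((n:ℝ)+1+α) * lagDD α n y := by
  have h : ((n:ℝ)+2) ≠ 0 := by positivity
  rw [show lagDD α (n+2) y = ((2*((n:ℝ)+1)+α+1-y) * lagDD α (n+1) y - 2 * lagD α (n+1) y - ((n:ℝ)+1+α) * lagDD α n y) / ((n:ℝ)+2) from rfl]
  field_simp

lemma lagA (α : ℝ) : ∀ m : ℕ, ∀ y : ℝ,
    y * lagD α (m+1) y = ((m:ℝ)+1) * lag α (m+1) y - ((m:ℝ)+1+α) * lag α m y := by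
  intro m
  induction m using Nat.twoStepInduction with
  | zero => intro y; simp [lag, lagD]; ring
  | one =>
    intro y
    have rl := lag_rec α 0 y
    have rd := lagD_rec α 0 y
    have l1 : lag α 1 y = -y + α + 1 := rfl
    have d1 : lagD α 1 y = -1 := rfl
    have l0 : lag α 0 y = 1 := rfl
    have d0 : lagD α 0 y = 0 := rfl
    push_cast at rl rd ⊢
    simp only [l1, d1, l0, d0] at rl rd
    have h2 : (2:ℝ) ≠ 0 := two_ne_zero
    have key : (2:ℝ) * (y * lagD α 2 y) = 2 * ((1+1) * lag α 2 y - (1+1+α) * lag α 1 y) := by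
      rw [l1]; linear_combination y * rd - 2 * rl
    have := mul_left_cancel₀ h2 key
    linear_combination this
  | more m ih0 ih1 =>
    intro y
    have h0 := ih0 y
    have h1 := ih1 y
    have hm3 : ((m:ℝ)+3) ≠ 0 := by positivity
    -- n := m+1 ; target index n+2 = m+3
    have RD := lagD_rec α (m+1) y
    have RL2 := lag_rec α (m+1) y
    have RL1 := lag_rec α m y
    push_cast at RD RL2 RL1 h0 h1 ⊢
    simp only [show m+2+1 = m+3 from rfl, show m+1+1 = m+2 from rfl] at RD RL2 h1 ⊢
    push_cast at RD RL2 ⊢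
    have key : ((m:ℝ)+3) * (y * lagD α (m+3) y)
        = ((m:ℝ)+3) * (((m:ℝ)+3) * lag α (m+3) y - ((m:ℝ)+3+α) * lag α (m+2) y) := by
      linear_combination y * RD + (2*((m:ℝ)+2)+α+1-y) * h1 - ((m:ℝ)+2+α) * h0
        - ((m:ℝ)+3) * RL2 + ((m:ℝ)+2+α) * RL1
    have := mul_left_cancel₀ hm3 key
    linear_combination this

lemma lagE (α : ℝ) : ∀ n : ℕ, ∀ y : ℝ,
    y * lagDD α n y + (α+1-y) * lagD α n y + (n:ℝ) * lag α n y = 0 := by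
  intro n
  induction n using Nat.twoStepInduction with
  | zero => intro y; simp [lag, lagD, lagDD]
  | one => intro y; simp [lag, lagD, lagDD]; ring
  | more n ih0 ih1 =>
    intro y
    have hE0 := ih0 y
    have hE1 := ih1 y
    have hA := lagA α n y
    have hn2 : ((n:ℝ)+2) ≠ 0 := by positivity
    have RDD := lagDD_rec α n y
    have RD := lagD_rec α n y
    have RL2 := lag_rec α n y
    push_cast at RDD RD RL2 hE0 hE1 hA ⊢
    have key : ((n:ℝ)+2) * (y * lagDD α (n+2) y + (α+1-y) * lagD α (n+2) y + ((n:ℝ)+2) * lag α (n+2) y)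
        = ((n:ℝ)+2) * 0 := by
      linear_combination y * RDD + (α+1-y) * RD + ((n:ℝ)+2) * RL2
        + (2*((n:ℝ)+1)+α+1-y) * hE1 - ((n:ℝ)+1+α) * hE0 - 2 * hA
    have := mul_left_cancel₀ hn2 key
    linear_combination this

lemma hasDerivAt_lag (α : ℝ) : ∀ n : ℕ, ∀ y : ℝ,
    HasDerivAt (fun z => lag α n z) (lagD α n y) y := by
  intro n
  induction n using Nat.twoStepInduction with
  | zero => intro y; exact hasDerivAt_const y 1
  | one => intro y; exact (((hasDerivAt_id y).neg).add_const α).add_const 1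
  | more n ih0 ih1 =>
    intro y
    have hc : HasDerivAt (fun z : ℝ => 2*((n:ℝ)+1)+α+1-z) (-1) y := by
      simpa using (hasDerivAt_id y).const_sub (2*((n:ℝ)+1)+α+1)
    have h1 := hc.mul (ih1 y)
    have h2 := (ih0 y).const_mul ((n:ℝ)+1+α)
    have h3 := (h1.sub h2).div_const ((n:ℝ)+2)
    have hval : ((-1) * lag α (n+1) y + (2*((n:ℝ)+1)+α+1-y) * lagD α (n+1) y
        - ((n:ℝ)+1+α) * lagD α n y) / ((n:ℝ)+2) = lagD α (n+2) y := by
      simp only [lagD]; ring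
    rw [hval] at h3
    exact h3

lemma hasDerivAt_lagD (α : ℝ) : ∀ n : ℕ, ∀ y : ℝ,
    HasDerivAt (fun z => lagD α n z) (lagDD α n y) y := by
  intro n
  induction n using Nat.twoStepInduction with
  | zero => intro y; exact hasDerivAt_const y 0
  | one => intro y; exact hasDerivAt_const y (-1)
  | more n ih0 ih1 =>
    intro y
    have hc : HasDerivAt (fun z : ℝ => 2*((n:ℝ)+1)+α+1-z) (-1) y := by
      simpa using (hasDerivAt_id y).const_sub (2*((n:ℝ)+1)+α+1)
    have h1 := hc.mul (ih1 y)
    have h2 := (ih0 y).const_mul ((n:ℝ)+1+α)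
    have h3 := ((h1.sub (hasDerivAt_lag α (n+1) y)).sub h2).div_const ((n:ℝ)+2)
    have hval : ((-1) * lagD α (n+1) y + (2*((n:ℝ)+1)+α+1-y) * lagDD α (n+1) y
        - lagD α (n+1) y - ((n:ℝ)+1+α) * lagDD α n y) / ((n:ℝ)+2) = lagDD α (n+2) y := by
      simp only [lagDD]; ring
    rw [hval] at h3
    exact h3

/-- Sturm–Liouville equation for the log orthogonal functions. -/
theorem lof_sturm_liouville (α β : ℝ) (hα : -1 < α) (hβ : -1 < β) (n : ℕ) :
    ∀ t ∈ Set.Ioo (0:ℝ) 1,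
      (-Real.log t) ^ (-α) * t ^ (-β) *
          deriv (fun x => (-Real.log x) ^ (α+1) * x ^ (β+2) * deriv (LOF α β n) x) t
        + (n:ℝ) * (β + 1) * LOF α β n t = 0 := by
  intro t ht
  obtain ⟨ht0, ht1⟩ := ht
  have hL : Real.log t < 0 := Real.log_neg ht0 ht1
  have hLpos : 0 < -Real.log t := by linarith
  have htne : t ≠ 0 := ne_of_gt ht0
  have hb1 : (0:ℝ) < β + 1 := by linarith
  -- derivative of LOF on (0,1)
  have hder : ∀ x : ℝ, 0 < x →
      HasDerivAt (LOF α β n) (lagD α n (-(β+1) * Real.log x) * (-(β+1) * x⁻¹)) x := by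
    intro x hx
    have hlog : HasDerivAt Real.log x⁻¹ x := Real.hasDerivAt_log (ne_of_gt hx)
    have hy : HasDerivAt (fun x => -(β+1) * Real.log x) (-(β+1) * x⁻¹) x := hlog.const_mul _
    exact (hasDerivAt_lag α n (-(β+1) * Real.log x)).comp x hy
  -- the inner function agrees with an explicit one near t
  set G : ℝ → ℝ := fun x =>
    -(β+1) * ((-Real.log x) ^ (α+1) * (x ^ (β+1) * lagD α n (-(β+1) * Real.log x))) with hG
  have hmem : Set.Ioo (0:ℝ) 1 ∈ nhds t := Ioo_mem_nhds ht0 ht1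
  have heq : (fun x => (-Real.log x) ^ (α+1) * x ^ (β+2) * deriv (LOF α β n) x)
      =ᶠ[nhds t] G := by
    filter_upwards [hmem] with x hx
    have hxe := (hder x hx.1).deriv
    rw [hxe, hG]
    rw [show β + 2 = β + 1 + 1 by ring, Real.rpow_add_one (ne_of_gt hx.1)]
    field_simp [ne_of_gt hx.1]
  -- explicit derivative of G at t
  have hlog : HasDerivAt Real.log t⁻¹ t := Real.hasDerivAt_log htne
  have hA : HasDerivAt (fun x => (-Real.log x) ^ (α+1))
      ((α+1) * (-Real.log t) ^ α * (-t⁻¹)) t := by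
    have h := (hlog.neg).rpow_const (p := α+1) (Or.inl (ne_of_gt hLpos))
    rw [show α + 1 - 1 = α by ring] at h
    simp only [Pi.neg_apply] at h
    convert h using 1
    ring
  have hB : HasDerivAt (fun x : ℝ => x ^ (β+1)) ((β+1) * t ^ β) t := by
    have h := Real.hasDerivAt_rpow_const (p := β+1) (Or.inl htne)
    rwa [show β + 1 - 1 = β by ring] at h
  have hP : HasDerivAt (fun x => lagD α n (-(β+1) * Real.log x))
      (lagDD α n (-(β+1) * Real.log t) * (-(β+1) * t⁻¹)) t :=
    (hasDerivAt_lagD α n (-(β+1) * Real.log t)).comp t (hlog.const_mul (-(β+1)))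
  have hGd : HasDerivAt G
      (-(β+1) * ((α+1) * (-Real.log t) ^ α * (-t⁻¹) *
          (t ^ (β+1) * lagD α n (-(β+1) * Real.log t))
        + (-Real.log t) ^ (α+1) *
          ((β+1) * t ^ β * lagD α n (-(β+1) * Real.log t)
            + t ^ (β+1) * (lagDD α n (-(β+1) * Real.log t) * (-(β+1) * t⁻¹))))) t :=
    (hA.mul (hB.mul hP)).const_mul (-(β+1))
  have hderiv_eq : deriv (fun x => (-Real.log x) ^ (α+1) * x ^ (β+2) * deriv (LOF α β n) x) t
      = -(β+1) * ((α+1) * (-Real.log t) ^ α * (-t⁻¹) *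
          (t ^ (β+1) * lagD α n (-(β+1) * Real.log t))
        + (-Real.log t) ^ (α+1) *
          ((β+1) * t ^ β * lagD α n (-(β+1) * Real.log t)
            + t ^ (β+1) * (lagDD α n (-(β+1) * Real.log t) * (-(β+1) * t⁻¹)))) := by
    rw [heq.deriv_eq]
    exact hGd.deriv
  rw [hderiv_eq]
  show (-Real.log t) ^ (-α) * t ^ (-β) * _ + (n:ℝ) * (β+1) * lag α n (-(β+1) * Real.log t) = 0
  -- rpow simplifications
  have eA1 : (-Real.log t) ^ (α+1) = (-Real.log t) ^ α * (-Real.log t) :=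
    Real.rpow_add_one (ne_of_gt hLpos) α
  have eAm : (-Real.log t) ^ (-α) = ((-Real.log t) ^ α)⁻¹ := Real.rpow_neg (le_of_lt hLpos) α
  have eB1 : t ^ (β+1) = t ^ β * t := Real.rpow_add_one htne β
  have eBm : t ^ (-β) = (t ^ β)⁻¹ := Real.rpow_neg (le_of_lt ht0) β
  have hu : (-Real.log t) ^ α ≠ 0 := ne_of_gt (Real.rpow_pos_of_pos hLpos α)
  have hv : t ^ β ≠ 0 := ne_of_gt (Real.rpow_pos_of_pos ht0 β)
  rw [eA1, eAm, eB1, eBm]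
  have hE := lagE α n (-(β+1) * Real.log t)
  set P := lagD α n (-(β+1) * Real.log t) with hPdef
  set DD := lagDD α n (-(β+1) * Real.log t) with hDDdef
  set LG := lag α n (-(β+1) * Real.log t) with hLGdef
  set u := (-Real.log t) ^ α with hudef
  set v := t ^ β with hvdef
  field_simp
  linear_combination (β+1) * hE
end

section
/- Let s > 0 and α > -1. Then for every n ∈ ℕ, ∫₀^∞ e^{-sy} y^α L_n^{(α)}(y) dy = (Γ(α+n+1)/Γ(n+1)) · (1 − 1/s)^n · s^{-α-1}. -/
set_option maxRecDepth 4000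

open MeasureTheory Real Set

/-- Coefficients of the generalized Laguerre polynomial. -/
noncomputable def lagCoeff (α : ℝ) (n k : ℕ) : ℝ :=
  (-1)^k * (n.choose k : ℝ) * Real.Gamma (α + n + 1) / (Real.Gamma (α + k + 1) * (n.factorial : ℝ))

lemma lagGpos {α : ℝ} (hα : -1 < α) (k : ℕ) : 0 < Real.Gamma (α + k + 1) := by
  have : (0:ℝ) ≤ k := Nat.cast_nonneg k
  exact Real.Gamma_pos_of_pos (by linarith)

lemma choose_cast_id (m j : ℕ) :
    (m.choose (j+1) : ℝ) * (j+1) = (m.choose j : ℝ) * ((m:ℝ) - j) := by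
  rcases le_or_gt j m with h | h
  · have h' : ((m - j : ℕ) : ℝ) = (m : ℝ) - j := by
      push_cast [Nat.cast_sub h]; ring
    rw [← h']
    exact_mod_cast congrArg (Nat.cast (R := ℝ)) (Nat.choose_succ_right_eq m j)
  · rw [Nat.choose_eq_zero_of_lt (by omega), Nat.choose_eq_zero_of_lt h]
    simp

lemma key_choose (α : ℝ) (n k : ℕ) :
    (((n+2).choose (k+1) : ℝ)) * (α+n+2)
      = (2*n+3+α) * ((n+1).choose (k+1) : ℝ) + (α+k+1) * ((n+1).choose k : ℝ)
        - ((n:ℝ)+1) * (n.choose (k+1) : ℝ) := by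
  have p1 : (((n+2).choose (k+1) : ℕ) : ℝ) = ((n+1).choose k : ℝ) + ((n+1).choose (k+1) : ℝ) := by
    rw [Nat.choose_succ_succ]; push_cast; ring
  have h2 : ((n+1).choose (k+1) : ℝ) * (k+1) = ((n+1).choose k : ℝ) * ((n:ℝ)+1-k) := by
    have := choose_cast_id (n+1) k; push_cast at this ⊢; linear_combination this
  have h1 : ((n:ℝ)-k) * ((n+1).choose (k+1) : ℝ) = ((n:ℝ)+1) * (n.choose (k+1) : ℝ) := by
    have a := choose_cast_id (n+1) (k+1)
    have b' : ((n:ℝ)+1) * (n.choose (k+1) : ℝ) = ((n+1).choose (k+1+1) : ℝ) * ((k:ℝ)+1+1) := by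
      exact_mod_cast congrArg (Nat.cast (R := ℝ)) (Nat.add_one_mul_choose_eq n (k+1))
    push_cast at a
    linear_combination -a - b'
  linear_combination (α+n+2)*p1 - h2 - h1

lemma lagCoeff_rec0 {α : ℝ} (hα : -1 < α) (n : ℕ) :
    ((n:ℝ)+2) * lagCoeff α (n+2) 0
      = (2*(n:ℝ)+α+3) * lagCoeff α (n+1) 0 - ((n:ℝ)+1+α) * lagCoeff α n 0 := by
  have hn : (0:ℝ) ≤ n := Nat.cast_nonneg n
  have hG : Real.Gamma (α + n + 1) ≠ 0 := (lagGpos hα n).ne'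
  have hH : Real.Gamma (α + 1) ≠ 0 := by
    have := (lagGpos hα 0).ne'; rwa [Nat.cast_zero, add_zero] at this
  have hF : ((n.factorial : ℝ)) ≠ 0 := by exact_mod_cast n.factorial_ne_zero
  have e2 : Real.Gamma (α + ((n+2:ℕ):ℝ) + 1) = (α+n+2)*((α+n+1)*Real.Gamma (α+n+1)) := by
    push_cast
    rw [show α + ((n:ℝ)+2) + 1 = (α+(n:ℝ)+2)+1 by ring, Real.Gamma_add_one (by linarith),
      show α+(n:ℝ)+2 = (α+(n:ℝ)+1)+1 by ring, Real.Gamma_add_one (by linarith)]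
  have e1 : Real.Gamma (α + ((n+1:ℕ):ℝ) + 1) = (α+n+1)*Real.Gamma (α+n+1) := by
    push_cast
    rw [show α + ((n:ℝ)+1) + 1 = (α+(n:ℝ)+1)+1 by ring, Real.Gamma_add_one (by linarith)]
  have f2 : (((n+2).factorial : ℕ):ℝ) = ((n:ℝ)+2)*(((n:ℝ)+1)*(n.factorial:ℝ)) := by
    rw [Nat.factorial_succ, Nat.factorial_succ]; push_cast; ring
  have f1 : (((n+1).factorial : ℕ):ℝ) = ((n:ℝ)+1)*(n.factorial:ℝ) := by
    rw [Nat.factorial_succ]; push_cast; ring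
  unfold lagCoeff
  rw [e2, e1, f2, f1]
  simp only [Nat.cast_zero, add_zero, pow_zero, Nat.choose_zero_right, Nat.cast_one, one_mul]
  field_simp
  ring

lemma lagCoeff_rec {α : ℝ} (hα : -1 < α) (n k : ℕ) :
    ((n:ℝ)+2) * lagCoeff α (n+2) (k+1)
      = (2*(n:ℝ)+α+3) * lagCoeff α (n+1) (k+1) - lagCoeff α (n+1) k
        - ((n:ℝ)+1+α) * lagCoeff α n (k+1) := by
  have hn : (0:ℝ) ≤ n := Nat.cast_nonneg n
  have hk : (0:ℝ) ≤ k := Nat.cast_nonneg k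
  have hG : Real.Gamma (α + n + 1) ≠ 0 := (lagGpos hα n).ne'
  have hH : Real.Gamma (α + k + 1) ≠ 0 := (lagGpos hα k).ne'
  have hF : ((n.factorial : ℝ)) ≠ 0 := by exact_mod_cast n.factorial_ne_zero
  have hk1 : α + (k:ℝ) + 1 ≠ 0 := by linarith
  have hn1 : α + (n:ℝ) + 1 ≠ 0 := by linarith
  have hnn1 : ((n:ℝ)+1) ≠ 0 := by linarith
  have hnn2 : ((n:ℝ)+2) ≠ 0 := by linarith
  have e2 : Real.Gamma (α + ((n+2:ℕ):ℝ) + 1) = (α+n+2)*((α+n+1)*Real.Gamma (α+n+1)) := by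
    push_cast
    rw [show α + ((n:ℝ)+2) + 1 = (α+(n:ℝ)+2)+1 by ring, Real.Gamma_add_one (by linarith),
      show α+(n:ℝ)+2 = (α+(n:ℝ)+1)+1 by ring, Real.Gamma_add_one (by linarith)]
  have e1 : Real.Gamma (α + ((n+1:ℕ):ℝ) + 1) = (α+n+1)*Real.Gamma (α+n+1) := by
    push_cast
    rw [show α + ((n:ℝ)+1) + 1 = (α+(n:ℝ)+1)+1 by ring, Real.Gamma_add_one (by linarith)]
  have ek : Real.Gamma (α + ((k+1:ℕ):ℝ) + 1) = (α+k+1)*Real.Gamma (α+k+1) := by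
    push_cast
    rw [show α + ((k:ℝ)+1) + 1 = (α+(k:ℝ)+1)+1 by ring, Real.Gamma_add_one (by linarith)]
  have f2 : (((n+2).factorial : ℕ):ℝ) = ((n:ℝ)+2)*(((n:ℝ)+1)*(n.factorial:ℝ)) := by
    rw [Nat.factorial_succ, Nat.factorial_succ]; push_cast; ring
  have f1 : (((n+1).factorial : ℕ):ℝ) = ((n:ℝ)+1)*(n.factorial:ℝ) := by
    rw [Nat.factorial_succ]; push_cast; ring
  set G := Real.Gamma (α + n + 1) with hGdef
  set H := Real.Gamma (α + k + 1) with hHdef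
  set F := (n.factorial : ℝ) with hFdef
  set D := (α+(k:ℝ)+1) * H * (((n:ℝ)+1) * F) with hD
  have hDne : D ≠ 0 := by
    rw [hD]; exact mul_ne_zero (mul_ne_zero hk1 hH) (mul_ne_zero hnn1 hF)
  have hdL : (α+(k:ℝ)+1) * H * (((n:ℝ)+2) * (((n:ℝ)+1) * F)) ≠ 0 :=
    mul_ne_zero (mul_ne_zero hk1 hH) (mul_ne_zero hnn2 (mul_ne_zero hnn1 hF))
  have hd2 : H * (((n:ℝ)+1) * F) ≠ 0 := mul_ne_zero hH (mul_ne_zero hnn1 hF)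
  have hd3 : (α+(k:ℝ)+1) * H * F ≠ 0 := mul_ne_zero (mul_ne_zero hk1 hH) hF
  have L : ((n:ℝ)+2) * lagCoeff α (n+2) (k+1)
      = ((-1)^k * (-(((n+2).choose (k+1) : ℕ):ℝ)) * ((α+n+2)*(α+n+1)) * G) / D := by
    unfold lagCoeff
    rw [e2, ek, f2, pow_succ, ← mul_div_assoc, div_eq_div_iff hdL hDne, hD]
    ring
  have R1 : (2*(n:ℝ)+α+3) * lagCoeff α (n+1) (k+1)
      = ((-1)^k * (-(((n+1).choose (k+1) : ℕ):ℝ)) * ((2*(n:ℝ)+α+3)*(α+n+1)) * G) / D := by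
    unfold lagCoeff
    rw [e1, ek, f1, pow_succ, ← mul_div_assoc, div_eq_div_iff hDne hDne, hD]
    ring
  have R2 : lagCoeff α (n+1) k
      = ((-1)^k * (((n+1).choose k : ℕ):ℝ) * ((α+k+1)*(α+n+1)) * G) / D := by
    unfold lagCoeff
    rw [e1, f1, div_eq_div_iff hd2 hDne, hD]
    ring
  have R3 : ((n:ℝ)+1+α) * lagCoeff α n (k+1)
      = ((-1)^k * (-((n.choose (k+1) : ℕ):ℝ)) * (((n:ℝ)+1+α)*((n:ℝ)+1)) * G) / D := by
    unfold lagCoeff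
    rw [ek, pow_succ, ← mul_div_assoc, div_eq_div_iff hd3 hDne, hD]
    ring
  rw [L, R1, R2, R3, div_sub_div_same, div_sub_div_same]
  congr 1
  linear_combination (-(α+(n:ℝ)+1) * (-1)^k * G) * key_choose α n k

lemma lagCoeff_zero_of_lt {α : ℝ} {n k : ℕ} (h : n < k) : lagCoeff α n k = 0 := by
  simp [lagCoeff, Nat.choose_eq_zero_of_lt h]

lemma lag_eq_sum {α : ℝ} (hα : -1 < α) (n : ℕ) (y : ℝ) :
    lag α n y = ∑ k ∈ Finset.range (n+1), lagCoeff α n k * y ^ k := by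
  induction n using Nat.strong_induction_on with
  | _ n ih =>
    match n with
    | 0 =>
      have h1 : Real.Gamma (α + (0:ℕ) + 1) ≠ 0 := (lagGpos hα 0).ne'
      simp [lag, lagCoeff]
      rw [div_self (by simpa using h1)]
    | 1 =>
      have h0 : Real.Gamma (α + 1) ≠ 0 := by
        have := (lagGpos hα 0).ne'; simpa using this
      have e1 : Real.Gamma (α + 1 + 1) = (α+1) * Real.Gamma (α+1) :=
        Real.Gamma_add_one (by linarith)
      show -y + α + 1 = _
      rw [Finset.sum_range_succ, Finset.sum_range_one]
      unfold lagCoeff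
      have ha1 : α + 1 ≠ 0 := by linarith
      norm_num [e1]
      field_simp
      ring
    | (m+2) =>
      have ih1 : lag α m y = ∑ k ∈ Finset.range (m+1), lagCoeff α m k * y ^ k := ih m (by omega)
      have ih2 : lag α (m+1) y = ∑ k ∈ Finset.range (m+2), lagCoeff α (m+1) k * y ^ k :=
        ih (m+1) (by omega)
      have hm2 : ((m:ℝ)+2) ≠ 0 := by positivity
      show ((2*((m:ℝ)+1)+α+1-y) * lag α (m+1) y - ((m:ℝ)+1+α) * lag α m y) / ((m:ℝ)+2)
          = ∑ k ∈ Finset.range (m+3), lagCoeff α (m+2) k * y ^ k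
      rw [ih1, ih2, div_eq_iff hm2]
      have E2 : ∑ k ∈ Finset.range (m+3), lagCoeff α (m+2) k * y ^ k
          = (∑ k ∈ Finset.range (m+2), lagCoeff α (m+2) (k+1) * y^(k+1)) + lagCoeff α (m+2) 0 := by
        rw [Finset.sum_range_succ' (fun k => lagCoeff α (m+2) k * y^k) (m+2)]
        norm_num
      have E1 : ∑ k ∈ Finset.range (m+2), lagCoeff α (m+1) k * y ^ k
          = (∑ k ∈ Finset.range (m+2), lagCoeff α (m+1) (k+1) * y^(k+1)) + lagCoeff α (m+1) 0 := by
        rw [Finset.sum_range_succ' (fun k => lagCoeff α (m+1) k * y^k) (m+1),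
          Finset.sum_range_succ (fun k => lagCoeff α (m+1) (k+1) * y^(k+1)) (m+1),
          lagCoeff_zero_of_lt (show m+1 < m+1+1 by omega)]
        norm_num
      have E0 : ∑ k ∈ Finset.range (m+1), lagCoeff α m k * y ^ k
          = (∑ k ∈ Finset.range (m+2), lagCoeff α m (k+1) * y^(k+1)) + lagCoeff α m 0 := by
        rw [Finset.sum_range_succ' (fun k => lagCoeff α m k * y^k) m,
          Finset.sum_range_succ (fun k => lagCoeff α m (k+1) * y^(k+1)) (m+1),
          Finset.sum_range_succ (fun k => lagCoeff α m (k+1) * y^(k+1)) m,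
          lagCoeff_zero_of_lt (show m < m+1+1 by omega), lagCoeff_zero_of_lt (show m < m+1 by omega)]
        norm_num
      have hy1 : y * (∑ k ∈ Finset.range (m+2), lagCoeff α (m+1) k * y^k)
          = ∑ k ∈ Finset.range (m+2), lagCoeff α (m+1) k * y^(k+1) := by
        rw [Finset.mul_sum]
        exact Finset.sum_congr rfl fun k _ => by ring
      have hsum : ((m:ℝ)+2) * (∑ k ∈ Finset.range (m+2), lagCoeff α (m+2) (k+1) * y^(k+1))
          = (2*(m:ℝ)+α+3) * (∑ k ∈ Finset.range (m+2), lagCoeff α (m+1) (k+1) * y^(k+1))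
            - (∑ k ∈ Finset.range (m+2), lagCoeff α (m+1) k * y^(k+1))
            - ((m:ℝ)+1+α) * (∑ k ∈ Finset.range (m+2), lagCoeff α m (k+1) * y^(k+1)) := by
        rw [Finset.mul_sum, Finset.mul_sum, Finset.mul_sum, ← Finset.sum_sub_distrib,
          ← Finset.sum_sub_distrib]
        exact Finset.sum_congr rfl fun k _ => by linear_combination y^(k+1) * lagCoeff_rec hα m k
      have h0 := lagCoeff_rec0 hα m
      rw [E2]
      linear_combination (2*(m:ℝ)+α+3)*E1 - hy1 - ((m:ℝ)+1+α)*E0 - hsum - h0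

lemma integrable_term {s p : ℝ} (hs : 0 < s) (hp : -1 < p) :
    IntegrableOn (fun y : ℝ => Real.exp (-s*y) * y ^ p) (Ioi 0) := by
  have h := integrableOn_rpow_mul_exp_neg_mul_rpow hp (zero_lt_one' ℝ) hs
  refine h.congr_fun (fun x hx => ?_) measurableSet_Ioi
  dsimp only
  rw [Real.rpow_one, mul_comm]

lemma integral_term {s p : ℝ} (hs : 0 < s) (hp : -1 < p) :
    ∫ y in Ioi (0:ℝ), Real.exp (-s*y) * y ^ p = (1/s)^(p+1) * Real.Gamma (p+1) := by
  rw [← Real.integral_rpow_mul_exp_neg_mul_Ioi (by linarith : (0:ℝ) < p + 1) hs]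
  refine setIntegral_congr_fun measurableSet_Ioi (fun y hy => ?_)
  rw [add_sub_cancel_right, neg_mul, mul_comm]

/-- Laplace-type integral of a generalized Laguerre polynomial. -/
theorem laguerre_laplace_integral (s α : ℝ) (hs : 0 < s) (hα : -1 < α) (n : ℕ) :
    ∫ y in Set.Ioi (0:ℝ), Real.exp (-s*y) * y ^ α * lag α n y
      = Real.Gamma (α + (n:ℝ) + 1) / Real.Gamma ((n:ℝ) + 1)
        * (1 - 1/s) ^ n * s ^ (-α - 1) := by
  have hFne : ((n.factorial : ℝ)) ≠ 0 := by exact_mod_cast n.factorial_ne_zero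
  have hcast : ∀ k : ℕ, -1 < α + (k:ℝ) := fun k => by
    have : (0:ℝ) ≤ k := Nat.cast_nonneg k; linarith
  calc ∫ y in Set.Ioi (0:ℝ), Real.exp (-s*y) * y ^ α * lag α n y
      = ∫ y in Set.Ioi (0:ℝ), ∑ k ∈ Finset.range (n+1),
          lagCoeff α n k * (Real.exp (-s*y) * y ^ (α + (k:ℝ))) := by
        refine setIntegral_congr_fun measurableSet_Ioi (fun y hy => ?_)
        rw [lag_eq_sum hα n y, Finset.mul_sum]
        refine Finset.sum_congr rfl fun k _ => ?_
        rw [Real.rpow_add (mem_Ioi.mp hy), Real.rpow_natCast]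
        ring
    _ = ∑ k ∈ Finset.range (n+1),
          lagCoeff α n k * ∫ y in Set.Ioi (0:ℝ), Real.exp (-s*y) * y ^ (α + (k:ℝ)) := by
        rw [integral_finset_sum _ (fun k _ => ((integrable_term hs (hcast k)).const_mul _))]
        exact Finset.sum_congr rfl fun k _ => MeasureTheory.integral_const_mul _ _
    _ = ∑ k ∈ Finset.range (n+1),
          lagCoeff α n k * ((1/s)^(α + (k:ℝ) + 1) * Real.Gamma (α + (k:ℝ) + 1)) := by
        exact Finset.sum_congr rfl fun k _ => by rw [integral_term hs (hcast k)]
    _ = ∑ k ∈ Finset.range (n+1),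
          (Real.Gamma (α + (n:ℝ) + 1) / (n.factorial : ℝ) * (1/s)^(α+1))
            * ((-(1/s))^k * 1^(n-k) * (n.choose k : ℝ)) := by
        refine Finset.sum_congr rfl fun k _ => ?_
        have e : (1/s:ℝ)^(α+(k:ℝ)+1) = (1/s)^(α+1) * (1/s)^k := by
          rw [show α+(k:ℝ)+1 = (α+1) + (k:ℝ) by ring, Real.rpow_add (by positivity),
            Real.rpow_natCast]
        rw [e, one_pow, neg_pow]
        unfold lagCoeff
        have hGk : Real.Gamma (α + (k:ℝ) + 1) ≠ 0 := (lagGpos hα k).ne'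
        field_simp
    _ = (Real.Gamma (α + (n:ℝ) + 1) / (n.factorial : ℝ) * (1/s)^(α+1))
          * ((-(1/s)) + 1)^n := by rw [← Finset.mul_sum, add_pow]
    _ = Real.Gamma (α + (n:ℝ) + 1) / Real.Gamma ((n:ℝ) + 1) * (1 - 1/s) ^ n * s ^ (-α - 1) := by
        rw [Real.Gamma_nat_eq_factorial, show (-(1/s:ℝ)) + 1 = 1 - 1/s by ring,
          show -α-1 = -(α+1) by ring, Real.rpow_neg hs.le, one_div,
          Real.inv_rpow hs.le]
        ring
end

section
/- Let r ≥ 0 and β > -1 with β ≠ 2r. The coefficients of f(t) = t^r in the expansion f = Σ_n f̂_n S_n^{(0,β,0)} with respect to the generalized log orthogonal functions with α = λ = 0 are given by f̂_n = ((s−1)/s)^n · s^{-1}, where s = (β + 2r + 2)/(2β + 2); equivalently f̂_n = (2β+2)/(β+2r+2) · ((2r−β)/(2r+2+β))^n. -/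
open MeasureTheory Real Set

/-- Generalized log orthogonal functions `S_n^{(α,β,λ)}(t) = t^{(β-λ)/2} S_n^{(α,β)}(t)`. -/
noncomputable def GLOF (α β lam : ℝ) (n : ℕ) (t : ℝ) : ℝ :=
  t ^ ((β - lam)/2) * LOF α β n t

lemma choose_id (n j : ℕ) (hj : j ≤ n + 1) :
    ((n:ℝ)+2) * ((n+2).choose (j+1)) =
      (2*(n:ℝ)+3) * ((n+1).choose (j+1)) + ((j:ℝ)+1) * ((n+1).choose j)
        - ((n:ℝ)+1) * (n.choose (j+1)) := by
  have h1 : (((n+2).choose (j+1)) : ℝ) = ((n+1).choose j) + ((n+1).choose (j+1)) := by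
    exact_mod_cast congrArg (Nat.cast (R := ℝ)) (Nat.choose_succ_succ (n+1) j)
  have h2 : (((n+1).choose (j+1)) : ℝ) = (n.choose j) + (n.choose (j+1)) := by
    exact_mod_cast congrArg (Nat.cast (R := ℝ)) (Nat.choose_succ_succ n j)
  have h3 : (n.choose j : ℝ) * ((n:ℝ)+1) = ((n+1).choose j) * (((n:ℝ)+1) - j) := by
    have h := Nat.choose_mul_succ_eq n j
    have hc : ((n + 1 - j : ℕ) : ℝ) = (n:ℝ) + 1 - j := by
      rw [Nat.cast_sub hj]; push_cast; ring
    calc (n.choose j : ℝ) * ((n:ℝ)+1) = ((n.choose j * (n+1) : ℕ) : ℝ) := by push_cast; ring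
      _ = (((n+1).choose j * (n+1-j) : ℕ) : ℝ) := by rw [h]
      _ = ((n+1).choose j) * (((n:ℝ)+1) - j) := by push_cast [hc]; ring
  linear_combination ((n:ℝ)+2)*h1 - ((n:ℝ)+1)*h2 - h3

lemma lag_eq (n : ℕ) (y : ℝ) :
    lag 0 n y = ∑ k ∈ Finset.range (n+1), (n.choose k : ℝ) * (-y)^k / k.factorial := by
  induction n using Nat.twoStepInduction with
  | zero => simp [lag]
  | one => simp [lag, Finset.sum_range_succ]; ring
  | more n ih1 ih2 =>
    have hn2 : ((n:ℝ)+2) ≠ 0 := by positivity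
    rw [lag, ih1, ih2, div_eq_iff hn2]
    have hS1 : (∑ k ∈ Finset.range (n+2), (((n+1).choose k : ℝ)) * (-y)^k / k.factorial)
        = ∑ k ∈ Finset.range (n+3), (((n+1).choose k : ℝ)) * (-y)^k / k.factorial := by
      refine Finset.sum_subset (Finset.range_subset_range.mpr (by omega)) (fun x hx hnx => ?_)
      have hx2 : x = n + 2 := by simp only [Finset.mem_range] at hx hnx; omega
      simp [hx2, Nat.choose_eq_zero_of_lt]
    have hS0 : (∑ k ∈ Finset.range (n+1), ((n.choose k : ℝ)) * (-y)^k / k.factorial)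
        = ∑ k ∈ Finset.range (n+3), ((n.choose k : ℝ)) * (-y)^k / k.factorial := by
      refine Finset.sum_subset (Finset.range_subset_range.mpr (by omega)) (fun x hx hnx => ?_)
      have hx2 : n + 1 ≤ x := by simp only [Finset.mem_range] at hx hnx; omega
      simp [Nat.choose_eq_zero_of_lt (by omega : n < x)]
    have hy : y * (∑ k ∈ Finset.range (n+2), (((n+1).choose k : ℝ)) * (-y)^k / k.factorial)
        = -∑ k ∈ Finset.range (n+3),
            ((k:ℝ) * (((n+1).choose (k-1) : ℝ)) / k.factorial) * (-y)^k := by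
      rw [Finset.sum_range_succ'
        (fun k => ((k:ℝ) * (((n+1).choose (k-1) : ℝ)) / k.factorial) * (-y)^k) (n+2)]
      simp only [Nat.add_sub_cancel, Nat.cast_zero, zero_mul, zero_div, pow_zero, mul_one,
        add_zero, Nat.cast_succ]
      rw [Finset.mul_sum, ← Finset.sum_neg_distrib]
      refine Finset.sum_congr rfl fun i _ => ?_
      have h : ((i+1).factorial : ℝ) = ((i:ℝ)+1) * i.factorial := by
        rw [Nat.factorial_succ]; push_cast; ring
      have h0 : (i.factorial : ℝ) ≠ 0 := by positivity
      have h1 : ((i:ℝ)+1) ≠ 0 := by positivity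
      rw [h, pow_succ]
      field_simp
    have hmain : (2*(n:ℝ)+3) *
          (∑ k ∈ Finset.range (n+3), (((n+1).choose k : ℝ)) * (-y)^k / k.factorial)
        + (∑ k ∈ Finset.range (n+3),
            ((k:ℝ) * (((n+1).choose (k-1) : ℝ)) / k.factorial) * (-y)^k)
        - ((n:ℝ)+1) * (∑ k ∈ Finset.range (n+3), ((n.choose k : ℝ)) * (-y)^k / k.factorial)
        = (∑ k ∈ Finset.range (n+3), (((n+2).choose k : ℝ)) * (-y)^k / k.factorial)
            * ((n:ℝ)+2) := by
      rw [Finset.mul_sum, Finset.mul_sum, Finset.sum_mul, ← Finset.sum_add_distrib,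
        ← Finset.sum_sub_distrib]
      refine Finset.sum_congr rfl fun k hk => ?_
      match k with
      | 0 => simp; ring
      | j+1 =>
        have hj : j ≤ n + 1 := by simp only [Finset.mem_range] at hk; omega
        have cid := choose_id n j hj
        have hfac : (((j+1).factorial : ℕ) : ℝ) ≠ 0 := by positivity
        rw [Nat.add_sub_cancel]
        push_cast
        linear_combination (-((-y)^(j+1)) / (((j+1).factorial : ℕ) : ℝ)) * cid
    linear_combination hmain - hy + (2*(n:ℝ)+3)*hS1 - ((n:ℝ)+1)*hS0

lemma exp_neg_image : (fun x : ℝ => Real.exp (-x)) '' Ioi 0 = Ioo 0 1 := by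
  ext t
  simp only [mem_image, mem_Ioi, mem_Ioo]
  constructor
  · rintro ⟨x, hx, rfl⟩
    exact ⟨Real.exp_pos _, by rw [← Real.exp_zero]; exact Real.exp_lt_exp.mpr (by linarith)⟩
  · rintro ⟨h0, h1⟩
    exact ⟨-Real.log t, by simpa using Real.log_neg h0 h1, by rw [neg_neg, Real.exp_log h0]⟩

lemma exp_neg_deriv (x : ℝ) (_ : x ∈ Ioi (0:ℝ)) :
    HasDerivWithinAt (fun x : ℝ => Real.exp (-x)) (-Real.exp (-x)) (Ioi 0) x := by
  exact ((Real.hasDerivAt_exp (-x)).comp x (hasDerivAt_neg x)).hasDerivWithinAt.congr_deriv (by ring)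

lemma exp_neg_injOn : (Ioi (0:ℝ)).InjOn (fun x : ℝ => Real.exp (-x)) :=
  fun a _ b _ h => by simpa using Real.exp_injective h

lemma key_transform (a : ℝ) (k : ℕ) :
    ∫ t in Set.Ioo (0:ℝ) 1, t ^ a * (Real.log t)^k
      = ∫ x in Ioi (0:ℝ), (-1)^k * (x ^ ((k:ℝ)+1-1) * Real.exp (-((a+1)*x))) := by
  rw [← exp_neg_image, integral_image_eq_integral_abs_deriv_smul measurableSet_Ioi
    exp_neg_deriv exp_neg_injOn]
  refine setIntegral_congr_fun measurableSet_Ioi (fun x hx => ?_)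
  have hx0 : (0:ℝ) < x := hx
  rw [abs_neg, abs_of_pos (Real.exp_pos _)]
  rw [Real.log_exp, Real.rpow_def_of_pos (Real.exp_pos _), Real.log_exp]
  rw [show ((k:ℝ)+1-1) = (k:ℝ) by ring, Real.rpow_natCast]
  simp only [smul_eq_mul, ← Real.exp_add]
  rw [show (-x)^k = (-1)^k * x^k from neg_pow x k,
    show -((a+1)*x) = -x + -x*a by ring, Real.exp_add]
  ring

lemma integrableOn_rpow_log_pow (a : ℝ) (ha : -1 < a) (k : ℕ) :
    IntegrableOn (fun t : ℝ => t ^ a * (Real.log t)^k) (Set.Ioo (0:ℝ) 1) := by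
  rw [← exp_neg_image, integrableOn_image_iff_integrableOn_abs_deriv_smul measurableSet_Ioi
    exp_neg_deriv exp_neg_injOn]
  have h1 : IntegrableOn (fun x : ℝ => x ^ ((k:ℝ)) * Real.exp (-(a+1) * x ^ (1:ℝ)))
      (Ioi (0:ℝ)) :=
    integrableOn_rpow_mul_exp_neg_mul_rpow (by exact_mod_cast (by linarith : (-1:ℝ) < k))
      zero_lt_one (by linarith)
  refine (IntegrableOn.congr_fun (h1.const_mul ((-1:ℝ)^k)) (fun x hx => ?_) measurableSet_Ioi)
  have hx0 : (0:ℝ) < x := hx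
  rw [abs_neg, abs_of_pos (Real.exp_pos _)]
  rw [smul_eq_mul, Real.log_exp, Real.rpow_def_of_pos (Real.exp_pos _), Real.log_exp]
  rw [Real.rpow_natCast, Real.rpow_one,
    show (-x)^k = (-1)^k * x^k from neg_pow x k,
    show -(a+1) * x = -x + -x*a by ring, Real.exp_add]
  ring

lemma integral_rpow_log_pow (a : ℝ) (ha : -1 < a) (k : ℕ) :
    ∫ t in Set.Ioo (0:ℝ) 1, t ^ a * (Real.log t)^k
      = (-1)^k * (k.factorial : ℝ) / (a+1)^(k+1) := by
  have ha1 : (0:ℝ) < a + 1 := by linarith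
  rw [key_transform, MeasureTheory.integral_const_mul,
    integral_rpow_mul_exp_neg_mul_Ioi (by positivity) ha1]
  rw [show ((k:ℝ)+1) = ((k+1 : ℕ):ℝ) by push_cast; ring, Real.rpow_natCast]
  rw [show (((k+1:ℕ)):ℝ) = ((k:ℕ):ℝ)+1 by push_cast; ring, Real.Gamma_nat_eq_factorial,
    one_div, inv_pow]
  field_simp

/-- Explicit GLOF expansion coefficients of `f(t) = t^r` for `α = λ = 0`. -/
theorem glof_coefficients_power (r β : ℝ) (hr : 0 ≤ r) (hβ : -1 < β) (hne : β ≠ 2*r) :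
    ∀ n : ℕ,
      (β + 1) * ∫ t in Set.Ioo (0:ℝ) 1, t ^ r * GLOF 0 β 0 n t
        = (((β + 2*r + 2)/(2*β + 2) - 1)/((β + 2*r + 2)/(2*β + 2))) ^ n
            * ((β + 2*r + 2)/(2*β + 2))⁻¹ ∧
      (β + 1) * ∫ t in Set.Ioo (0:ℝ) 1, t ^ r * GLOF 0 β 0 n t
        = (2*β + 2)/(β + 2*r + 2) * ((2*r - β)/(2*r + 2 + β)) ^ n := by
  intro n
  set a : ℝ := r + (β - 0)/2 with ha_def
  have ha : -1 < a := by rw [ha_def]; linarith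
  have ha1 : (0:ℝ) < a + 1 := by linarith
  have hb1 : (0:ℝ) < β + 1 := by linarith
  have hb2 : (0:ℝ) < β + 2*r + 2 := by linarith
  have hb3 : (0:ℝ) < 2*β + 2 := by linarith
  have step1 : Set.EqOn (fun t : ℝ => t ^ r * GLOF 0 β 0 n t)
      (fun t : ℝ => ∑ k ∈ Finset.range (n+1),
        ((n.choose k : ℝ) * (β+1)^k / k.factorial) * (t ^ a * (Real.log t)^k))
      (Set.Ioo 0 1) := by
    intro t ht
    simp only [GLOF, LOF]
    rw [lag_eq, ← mul_assoc, ← Real.rpow_add ht.1, Finset.mul_sum]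
    refine Finset.sum_congr rfl fun k _ => ?_
    rw [show -(-(β+1) * Real.log t) = (β+1) * Real.log t by ring, mul_pow]
    rw [show r + (β - 0)/2 = a from ha_def.symm]
    ring
  have hI : (∫ t in Set.Ioo (0:ℝ) 1, t ^ r * GLOF 0 β 0 n t)
      = ∑ k ∈ Finset.range (n+1), ((n.choose k : ℝ) * (β+1)^k / k.factorial)
          * ((-1)^k * (k.factorial : ℝ) / (a+1)^(k+1)) := by
    rw [setIntegral_congr_fun measurableSet_Ioo step1,
      MeasureTheory.integral_finset_sum _
        (fun k _ => (integrableOn_rpow_log_pow a ha k).const_mul _)]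
    exact Finset.sum_congr rfl fun k _ => by
      rw [MeasureTheory.integral_const_mul, integral_rpow_log_pow a ha k]
  have hsum : (∑ k ∈ Finset.range (n+1), ((n.choose k : ℝ) * (β+1)^k / k.factorial)
          * ((-1)^k * (k.factorial : ℝ) / (a+1)^(k+1)))
      = ((a - β)/(a+1))^n * (1/(a+1)) := by
    calc (∑ k ∈ Finset.range (n+1), ((n.choose k : ℝ) * (β+1)^k / k.factorial)
          * ((-1)^k * (k.factorial : ℝ) / (a+1)^(k+1)))
        = ∑ k ∈ Finset.range (n+1),
            ((-(β+1)/(a+1))^k * 1^(n-k) * (n.choose k)) * (1/(a+1)) := by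
          refine Finset.sum_congr rfl fun k _ => ?_
          have hf : (k.factorial : ℝ) ≠ 0 := by positivity
          rw [div_pow, one_pow, neg_pow (β+1) k, pow_succ]
          field_simp
      _ = ((-(β+1)/(a+1)) + 1)^n * (1/(a+1)) := by
          rw [← Finset.sum_mul, ← add_pow]
      _ = ((a - β)/(a+1))^n * (1/(a+1)) := by
          rw [show (-(β+1)/(a+1)) + 1 = (a - β)/(a+1) by field_simp; ring]
  have hbase : (a - β)/(a+1) = (2*r - β)/(2*r + 2 + β) := by
    rw [ha_def]
    rw [div_eq_div_iff (by linarith) (by linarith)]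
    ring
  have hA : a + 1 = (β + 2*r + 2)/2 := by rw [ha_def]; ring
  have hL : (β+1) * ((((2*r - β)/(2*r + 2 + β)))^n * (1/(a+1)))
      = ((2*r - β)/(2*r + 2 + β))^n * ((2*β + 2)/(β + 2*r + 2)) := by
    rw [hA]
    field_simp
  constructor
  · rw [hI, hsum, hbase, hL]
    rw [show (((β + 2*r + 2)/(2*β + 2) - 1)/((β + 2*r + 2)/(2*β + 2)))
        = (2*r - β)/(2*r + 2 + β) by
      rw [div_eq_div_iff (by positivity) (by linarith)]; field_simp; ring]
    rw [inv_div]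
  · rw [hI, hsum, hbase, hL]
    ring
end

section
/- Let r ≥ 0 and β > -1. The orthogonal projection π_N^{0,β,0} of f(t) = t^r onto span{t^{β/2}(log t)^j : 0 ≤ j ≤ N} in L²(0,1) satisfies ‖t^r − π_N^{0,β,0} t^r‖_{L²(0,1)} ≤ √(2(β+1)N) · |(2r−β)/(2r+β+2)|^N for all sufficiently large N. -/
open MeasureTheory Real Set

/-- Orthogonal projection onto `span{S_n^{(0,β,0)} : n ≤ N}` in `L²(0,1)`. -/
noncomputable def glofProj0 (β : ℝ) (N : ℕ) (f : ℝ → ℝ) : ℝ → ℝ :=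
  fun t => ∑ n ∈ Finset.range (N+1),
    ((β + 1) * ∫ x in Set.Ioo (0:ℝ) 1, f x * GLOF 0 β 0 n x) * GLOF 0 β 0 n t

lemma momIoi {b : ℝ} (hb : 0 < b) (k : ℕ) :
    ∫ y in Ioi (0:ℝ), y ^ k * Real.exp (-(b*y)) = (k.factorial : ℝ) / b ^ (k+1) := by
  have h := integral_rpow_mul_exp_neg_mul_Ioi (a := (k:ℝ)+1) (r := b) (by positivity) hb
  rw [show ((k:ℝ)+1-1) = (k:ℝ) by ring] at h
  rw [show (∫ y in Ioi (0:ℝ), y ^ k * Real.exp (-(b*y)))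
      = ∫ t in Ioi (0:ℝ), t ^ ((k:ℝ)) * Real.exp (-(b*t)) from
    setIntegral_congr_fun measurableSet_Ioi (fun t ht => by
      rw [Real.rpow_natCast]), h, Real.Gamma_nat_eq_factorial,
    show ((1:ℝ)/b) ^ ((k:ℝ)+1) = (1/b)^(k+1) by
      rw [show ((k:ℝ)+1) = ((k+1:ℕ):ℝ) by push_cast; ring, Real.rpow_natCast]]
  rw [div_pow, one_pow]
  ring

lemma momIoiInt {b : ℝ} (hb : 0 < b) (k : ℕ) :
    IntegrableOn (fun y => y ^ k * Real.exp (-(b*y))) (Ioi (0:ℝ)) := by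
  have h := integrableOn_rpow_mul_exp_neg_mul_rpow (s := (k:ℝ)) (p := 1) (b := b)
    (neg_one_lt_zero.trans_le (Nat.cast_nonneg k)) one_pos hb
  refine (integrableOn_congr_fun (fun t ht => ?_) measurableSet_Ioi).mp h
  rw [Real.rpow_one, Real.rpow_natCast]
  ring_nf

lemma expneg_image : (fun y : ℝ => rexp (-y)) '' Ioi 0 = Ioo 0 1 := by
  ext x
  simp only [mem_image, mem_Ioi, mem_Ioo]
  constructor
  · rintro ⟨y, hy, rfl⟩
    exact ⟨Real.exp_pos _, by rw [Real.exp_lt_one_iff]; linarith⟩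
  · rintro ⟨h0, h1⟩
    exact ⟨-Real.log x, by
      have := Real.log_neg h0 h1; linarith, by rw [neg_neg, Real.exp_log h0]⟩

lemma expneg_deriv : ∀ y ∈ Ioi (0:ℝ),
    HasDerivWithinAt (fun y : ℝ => rexp (-y)) (-rexp (-y)) (Ioi 0) y := by
  intro y _
  have := ((Real.hasDerivAt_exp (-y)).comp y (hasDerivAt_neg y))
  have h2 := this.hasDerivWithinAt (s := Ioi 0)
  rw [mul_neg_one] at h2
  exact h2

lemma expneg_inj : InjOn (fun y : ℝ => rexp (-y)) (Ioi 0) := fun a _ b _ h => by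
  have := Real.exp_injective h; linarith

lemma key_subst (g : ℝ → ℝ) :
    ∫ t in Ioo (0:ℝ) 1, g t = ∫ y in Ioi (0:ℝ), rexp (-y) * g (rexp (-y)) := by
  rw [← expneg_image, integral_image_eq_integral_abs_deriv_smul measurableSet_Ioi
    expneg_deriv expneg_inj g]
  refine setIntegral_congr_fun measurableSet_Ioi (fun y hy => ?_)
  rw [abs_neg, abs_of_pos (Real.exp_pos _)]
  rfl

lemma key_subst_int (g : ℝ → ℝ) :
    IntegrableOn g (Ioo (0:ℝ) 1) ↔
      IntegrableOn (fun y => rexp (-y) * g (rexp (-y))) (Ioi (0:ℝ)) := by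
  rw [← expneg_image, integrableOn_image_iff_integrableOn_abs_deriv_smul measurableSet_Ioi
    expneg_deriv expneg_inj g]
  refine integrableOn_congr_fun (fun y hy => ?_) measurableSet_Ioi
  rw [abs_neg, abs_of_pos (Real.exp_pos _)]
  rfl

lemma subst_eval (q : ℝ) (k : ℕ) (y : ℝ) :
    rexp (-y) * (rexp (-y) ^ q * (Real.log (rexp (-y)))^k)
      = (-1:ℝ)^k * (y ^ k * rexp (-((q+1)*y))) := by
  rw [Real.log_exp, Real.rpow_def_of_pos (Real.exp_pos _), Real.log_exp]
  have h1 : rexp (-((q+1)*y)) = rexp (-y) * rexp (-y*q) := by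
    rw [← Real.exp_add]; ring_nf
  have h2 : (-y)^k = (-1:ℝ)^k * y^k := by rw [neg_pow]
  rw [h1, h2]; ring

lemma momIoo {q : ℝ} (hq : -1 < q) (k : ℕ) :
    ∫ t in Ioo (0:ℝ) 1, t ^ q * (Real.log t)^k
      = (-1:ℝ)^k * (k.factorial : ℝ) / (q+1) ^ (k+1) := by
  have hb : 0 < q + 1 := by linarith
  rw [key_subst (fun t => t ^ q * (Real.log t)^k)]
  simp only [subst_eval]
  rw [integral_const_mul, momIoi hb k]
  ring

lemma momIooInt {q : ℝ} (hq : -1 < q) (k : ℕ) :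
    IntegrableOn (fun t => t ^ q * (Real.log t)^k) (Ioo (0:ℝ) 1) := by
  have hb : 0 < q + 1 := by linarith
  rw [key_subst_int]
  simp only [subst_eval]
  exact (momIoiInt hb k).const_mul _

noncomputable def lagc (m k : ℕ) : ℝ := (-1)^k * (m.choose k) / (k.factorial)

lemma lagc_succ (m j : ℕ) :
    lagc m (j+1) = -(m.choose (j+1) : ℝ) * ((-1)^j / (((j:ℝ)+1) * j.factorial)) := by
  unfold lagc
  rw [pow_succ, Nat.factorial_succ]
  have h1 : ((j:ℝ)+1) ≠ 0 := by positivity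
  have h2 : (j.factorial : ℝ) ≠ 0 := by exact_mod_cast j.factorial_ne_zero
  field_simp
  push_cast
  ring

lemma lagc_alt (n j : ℕ) :
    lagc (n+1) j = (((j:ℝ)+1) * (n+1).choose j) * ((-1)^j / (((j:ℝ)+1) * j.factorial)) := by
  unfold lagc
  have h1 : ((j:ℝ)+1) ≠ 0 := by positivity
  have h2 : (j.factorial : ℝ) ≠ 0 := by exact_mod_cast j.factorial_ne_zero
  field_simp

lemma lagc_coeff (n j : ℕ) (hj : j ≤ n+1) :
    ((n:ℝ)+2) * lagc (n+2) (j+1)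
      = (2*(n:ℝ)+3) * lagc (n+1) (j+1) - lagc (n+1) j - ((n:ℝ)+1) * lagc n (j+1) := by
  have p1 : ((n+2).choose (j+1) : ℝ) = (n+1).choose j + (n+1).choose (j+1) := by
    rw [Nat.choose_succ_succ (n+1) j]; push_cast; ring
  have p2 : ((n+1).choose (j+1) : ℝ) = n.choose j + n.choose (j+1) := by
    rw [Nat.choose_succ_succ n j]; push_cast; ring
  have p3 : (n.choose j : ℝ) * ((n:ℝ)+1) = (n+1).choose j * ((n:ℝ)+1-(j:ℝ)) := by
    have h := Nat.choose_mul_succ_eq n j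
    have h2 : ((n.choose j * (n+1) : ℕ) : ℝ) = (((n+1).choose j * (n+1-j) : ℕ) : ℝ) := by
      exact_mod_cast congrArg (fun x : ℕ => (x:ℝ)) h
    rw [Nat.cast_mul, Nat.cast_mul, Nat.cast_sub (by omega)] at h2
    push_cast at h2 ⊢
    linarith
  rw [lagc_succ (n+2) j, lagc_succ (n+1) j, lagc_succ n j, lagc_alt n j]
  set E : ℝ := (-1)^j / (((j:ℝ)+1) * j.factorial) with hE
  linear_combination (-E * ((n:ℝ)+2)) * p1 + (E * ((n:ℝ)+1)) * p2 + E * p3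

lemma lagc_zero (m : ℕ) : lagc m 0 = 1 := by simp [lagc]

lemma sum_ext (m M : ℕ) (h : m ≤ M) (y : ℝ) :
    ∑ k ∈ Finset.range (m+1), lagc m k * y^k
      = ∑ k ∈ Finset.range (M+1), lagc m k * y^k := by
  refine Finset.sum_subset (fun x hx => Finset.mem_range.mpr (by
    have := Finset.mem_range.mp hx; omega)) ?_
  intro k hk hk2
  simp only [Finset.mem_range] at hk hk2
  have : m < k := by omega
  simp [lagc, Nat.choose_eq_zero_of_lt this]

lemma lag_expand (n : ℕ) (y : ℝ) :
    lag 0 n y = ∑ k ∈ Finset.range (n+1), lagc n k * y^k := by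
  induction n using Nat.twoStepInduction with
  | zero => simp [lag, lagc]
  | one =>
    rw [show lag 0 1 y = -y + 0 + 1 from rfl]
    rw [Finset.sum_range_succ, Finset.sum_range_one]
    simp [lagc]
    ring
  | more n ih2 ih1 =>
    have hn2 : ((n:ℝ)+2) ≠ 0 := by positivity
    rw [show lag 0 (n+2) y
        = ((2*((n:ℝ)+1)+0+1-y) * lag 0 (n+1) y - ((n:ℝ)+1+0) * lag 0 n y) / ((n:ℝ)+2) from rfl,
      ih1, ih2]
    rw [div_eq_iff hn2]
    have e1 : ∑ k ∈ Finset.range (n+2), lagc (n+1) k * y^k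
        = ∑ k ∈ Finset.range (n+3), lagc (n+1) k * y^k := sum_ext (n+1) (n+2) (by omega) y
    have e2 : ∑ k ∈ Finset.range (n+1), lagc n k * y^k
        = ∑ k ∈ Finset.range (n+3), lagc n k * y^k := sum_ext n (n+2) (by omega) y
    set D : ℕ → ℝ := fun k => Nat.rec 0 (fun j _ => lagc (n+1) j) k with hD
    have hshift : y * ∑ k ∈ Finset.range (n+2), lagc (n+1) k * y^k
        = ∑ k ∈ Finset.range (n+3), D k * y^k := by
      rw [Finset.sum_range_succ' (fun k => D k * y^k) (n+2)]
      simp only [hD]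
      rw [Finset.mul_sum]
      simp [pow_succ]
      refine Finset.sum_congr rfl (fun k hk => by ring)
    have hsh2 : y * ∑ k ∈ Finset.range (n+3), lagc (n+1) k * y^k
        = ∑ k ∈ Finset.range (n+3), D k * y^k := by rw [← e1]; exact hshift
    have hmain : ∑ k ∈ Finset.range (n+3), (((n:ℝ)+2) * lagc (n+2) k) * y^k
        = ∑ k ∈ Finset.range (n+3),
            ((2*(n:ℝ)+3) * lagc (n+1) k - D k - ((n:ℝ)+1) * lagc n k) * y^k := by
      refine Finset.sum_congr rfl (fun k hk => ?_)
      congr 1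
      simp only [Finset.mem_range] at hk
      cases k with
      | zero => simp [lagc_zero, hD]; ring
      | succ j =>
        have hDj : D (j+1) = lagc (n+1) j := rfl
        rw [hDj, lagc_coeff n j (by omega)]
    have h4 : ∑ k ∈ Finset.range (n+3), (((n:ℝ)+2) * lagc (n+2) k) * y^k
        = ((n:ℝ)+2) * ∑ k ∈ Finset.range (n+3), lagc (n+2) k * y^k := by
      rw [Finset.mul_sum]; exact Finset.sum_congr rfl (fun k _ => by ring)
    have h5 : ∑ k ∈ Finset.range (n+3),
          ((2*(n:ℝ)+3) * lagc (n+1) k - D k - ((n:ℝ)+1) * lagc n k) * y^k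
        = (2*(n:ℝ)+3) * (∑ k ∈ Finset.range (n+3), lagc (n+1) k * y^k)
          - (∑ k ∈ Finset.range (n+3), D k * y^k)
          - ((n:ℝ)+1) * (∑ k ∈ Finset.range (n+3), lagc n k * y^k) := by
      rw [Finset.mul_sum, Finset.mul_sum, ← Finset.sum_sub_distrib, ← Finset.sum_sub_distrib]
      exact Finset.sum_congr rfl (fun k _ => by ring)
    rw [e1, e2]
    linear_combination -h5 - hsh2 - hmain + h4

lemma altsum (m : ℕ) :
    ∑ i ∈ Finset.range (m+1), (-1:ℝ)^i * (m.choose i) = if m = 0 then 1 else 0 := by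
  have h := Int.alternating_sum_range_choose (n := m)
  calc ∑ i ∈ Finset.range (m+1), (-1:ℝ)^i * (m.choose i)
      = ((∑ i ∈ Finset.range (m+1), (-1)^i * (m.choose i) : ℤ) : ℝ) := by push_cast; rfl
    _ = _ := by rw [h]; split <;> simp

lemma vand (k l N : ℕ) (hk : k ≤ N) :
    (((k+l).choose k : ℕ) : ℝ) = ∑ j ∈ Finset.range (N+1), (k.choose j : ℝ) * (l.choose j) := by
  have h := Nat.add_choose_eq k l k
  rw [Finset.Nat.sum_antidiagonal_eq_sum_range_succ (fun i j => k.choose i * l.choose j) k] at h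
  have h2 : ∑ j ∈ Finset.range (k+1), (k.choose j : ℝ) * (l.choose j)
      = ∑ i ∈ Finset.range (k+1), (k.choose i : ℝ) * (l.choose (k - i)) := by
    rw [← Finset.sum_range_reflect (fun j => (k.choose j : ℝ) * (l.choose j)) (k+1)]
    refine Finset.sum_congr rfl (fun i hi => ?_)
    simp only [Finset.mem_range] at hi
    have hik : i ≤ k := by omega
    rw [Nat.add_sub_cancel]
    rw [Nat.choose_symm hik]
  have h3 : ∑ j ∈ Finset.range (N+1), (k.choose j : ℝ) * (l.choose j)
      = ∑ j ∈ Finset.range (k+1), (k.choose j : ℝ) * (l.choose j) := by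
    refine (Finset.sum_subset (fun x hx => Finset.mem_range.mpr (by
      have := Finset.mem_range.mp hx; omega)) ?_).symm
    intro j hj hj2
    simp only [Finset.mem_range] at hj hj2
    rw [Nat.choose_eq_zero_of_lt (by omega)]
    simp
  rw [h3, h2, h]
  push_cast
  rfl

lemma innerid (n j : ℕ) :
    ∑ k ∈ Finset.range (n+1), (-1:ℝ)^k * (n.choose k) * (k.choose j)
      = if j = n then (-1:ℝ)^n else 0 := by
  by_cases hj : j ≤ n
  · have hsplit : Finset.range (n+1) = Finset.Ico 0 (n+1) := by rw [Finset.range_eq_Ico]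
    rw [hsplit, ← Finset.sum_Ico_consecutive _ (Nat.zero_le j) (by omega : j ≤ n+1)]
    have hz : ∑ k ∈ Finset.Ico 0 j, (-1:ℝ)^k * (n.choose k) * (k.choose j) = 0 := by
      refine Finset.sum_eq_zero (fun k hk => ?_)
      simp only [Finset.mem_Ico] at hk
      have hz2 : k.choose j = 0 := Nat.choose_eq_zero_of_lt (by omega)
      rw [hz2]
      simp
    rw [hz, zero_add, Finset.sum_Ico_eq_sum_range]
    have hrw : ∀ i ∈ Finset.range (n+1-j), (-1:ℝ)^(j+i) * (n.choose (j+i)) * ((j+i).choose j)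
        = ((-1:ℝ)^j * (n.choose j)) * ((-1:ℝ)^i * ((n-j).choose i)) := by
      intro i hi
      simp only [Finset.mem_range] at hi
      have h1 : j + i ≤ n := by omega
      have h2 : (n.choose (j+i) : ℝ) * ((j+i).choose j)
          = (n.choose j : ℝ) * ((n-j).choose i) := by
        have := Nat.choose_mul (n := n) (k := j+i) (s := j) (by omega)
        rw [Nat.add_sub_cancel_left] at this
        exact_mod_cast congrArg (fun x : ℕ => (x:ℝ)) this
      rw [pow_add]
      linear_combination ((-1:ℝ)^j * (-1:ℝ)^i) * h2
    rw [Finset.sum_congr rfl hrw, ← Finset.mul_sum]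
    rw [show n+1-j = (n-j)+1 by omega, altsum (n-j)]
    by_cases hjn : j = n
    · subst hjn
      simp
    · rw [if_neg (by omega), if_neg hjn]
      ring
  · rw [if_neg (by omega)]
    refine Finset.sum_eq_zero (fun k hk => ?_)
    simp only [Finset.mem_range] at hk
    have hz2 : k.choose j = 0 := Nat.choose_eq_zero_of_lt (by omega)
    rw [hz2]
    simp

lemma combid (n m : ℕ) :
    ∑ k ∈ Finset.range (n+1), ∑ l ∈ Finset.range (m+1),
      (-1:ℝ)^(k+l) * (n.choose k) * (m.choose l) * ((k+l).choose k)
      = if n = m then 1 else 0 := by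
  set N := n + m with hN
  have step1 : ∀ k ∈ Finset.range (n+1), ∀ l ∈ Finset.range (m+1),
      (-1:ℝ)^(k+l) * (n.choose k) * (m.choose l) * ((k+l).choose k)
      = ∑ j ∈ Finset.range (N+1), ((-1:ℝ)^k * (n.choose k) * (k.choose j))
          * ((-1:ℝ)^l * (m.choose l) * (l.choose j)) := by
    intro k hk l hl
    simp only [Finset.mem_range] at hk hl
    rw [show ((-1:ℝ)^(k+l) * (n.choose k) * (m.choose l) * ((k+l).choose k))
        = ((-1:ℝ)^k * (n.choose k)) * ((-1:ℝ)^l * (m.choose l)) * (((k+l).choose k):ℝ) by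
      rw [pow_add]; ring]
    rw [vand k l N (by omega), Finset.mul_sum]
    exact Finset.sum_congr rfl (fun j hj => by ring)
  calc ∑ k ∈ Finset.range (n+1), ∑ l ∈ Finset.range (m+1),
        (-1:ℝ)^(k+l) * (n.choose k) * (m.choose l) * ((k+l).choose k)
      = ∑ k ∈ Finset.range (n+1), ∑ l ∈ Finset.range (m+1), ∑ j ∈ Finset.range (N+1),
          ((-1:ℝ)^k * (n.choose k) * (k.choose j))
            * ((-1:ℝ)^l * (m.choose l) * (l.choose j)) := by
        refine Finset.sum_congr rfl (fun k hk => Finset.sum_congr rfl (fun l hl => ?_))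
        exact step1 k hk l hl
    _ = ∑ j ∈ Finset.range (N+1), ∑ k ∈ Finset.range (n+1), ∑ l ∈ Finset.range (m+1),
          ((-1:ℝ)^k * (n.choose k) * (k.choose j))
            * ((-1:ℝ)^l * (m.choose l) * (l.choose j)) := by
        rw [show (∑ k ∈ Finset.range (n+1), ∑ l ∈ Finset.range (m+1), ∑ j ∈ Finset.range (N+1),
            ((-1:ℝ)^k * (n.choose k) * (k.choose j))
              * ((-1:ℝ)^l * (m.choose l) * (l.choose j)))
            = ∑ k ∈ Finset.range (n+1), ∑ j ∈ Finset.range (N+1), ∑ l ∈ Finset.range (m+1),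
            ((-1:ℝ)^k * (n.choose k) * (k.choose j))
              * ((-1:ℝ)^l * (m.choose l) * (l.choose j)) from
          Finset.sum_congr rfl (fun k _ => Finset.sum_comm)]
        exact Finset.sum_comm
    _ = ∑ j ∈ Finset.range (N+1),
          (∑ k ∈ Finset.range (n+1), (-1:ℝ)^k * (n.choose k) * (k.choose j))
            * (∑ l ∈ Finset.range (m+1), (-1:ℝ)^l * (m.choose l) * (l.choose j)) := by
        refine Finset.sum_congr rfl (fun j _ => ?_)
        rw [Finset.sum_mul_sum]
    _ = if n = m then 1 else 0 := by
        simp only [innerid]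
        rw [Finset.sum_eq_single n]
        · by_cases h : n = m
          · subst h
            simp only [if_true, ite_true, eq_self_iff_true]
            rw [← pow_add, ← two_mul, pow_mul]
            simp
          · rw [if_pos rfl, if_neg h, if_neg h, mul_zero]
        · intro j hj hjn
          rw [if_neg hjn]
          simp
        · intro hn
          exfalso
          exact hn (Finset.mem_range.mpr (by omega))

lemma LOF_expand (β : ℝ) (n : ℕ) (t : ℝ) :
    LOF 0 β n t = ∑ k ∈ Finset.range (n+1),
      (lagc n k * (-(β+1))^k) * (Real.log t)^k := by
  rw [LOF, lag_expand]
  exact Finset.sum_congr rfl (fun k _ => by rw [mul_pow]; ring)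

lemma intOn_rpow_LOF {β q : ℝ} (hq : -1 < q) (n : ℕ) :
    IntegrableOn (fun t => t ^ q * LOF 0 β n t) (Ioo (0:ℝ) 1) := by
  have h : (fun t : ℝ => t ^ q * LOF 0 β n t)
      = fun t => ∑ k ∈ Finset.range (n+1),
          (lagc n k * (-(β+1))^k) * (t ^ q * (Real.log t)^k) := by
    funext t
    rw [LOF_expand, Finset.mul_sum]
    exact Finset.sum_congr rfl (fun k _ => by ring)
  rw [h]
  exact integrable_finset_sum _ (fun k _ => (momIooInt hq k).const_mul _)

lemma int_rpow_LOF {β q : ℝ} (hq : -1 < q) (n : ℕ) :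
    ∫ t in Ioo (0:ℝ) 1, t ^ q * LOF 0 β n t = (q - β)^n / (q+1)^(n+1) := by
  have hq1 : (q+1) ≠ 0 := by linarith
  have heq : ∀ t ∈ Ioo (0:ℝ) 1, t ^ q * LOF 0 β n t
      = ∑ k ∈ Finset.range (n+1),
          (lagc n k * (-(β+1))^k) * (t ^ q * (Real.log t)^k) := by
    intro t _
    rw [LOF_expand, Finset.mul_sum]
    exact Finset.sum_congr rfl (fun k _ => by ring)
  rw [setIntegral_congr_fun measurableSet_Ioo heq,
    integral_finset_sum _ (fun k _ => (momIooInt hq k).const_mul _)]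
  have hterm : ∀ k ∈ Finset.range (n+1),
      (∫ t in Ioo (0:ℝ) 1, (lagc n k * (-(β+1))^k) * (t ^ q * (Real.log t)^k))
      = ((-(β+1))^k * (q+1)^(n-k) * (n.choose k : ℝ)) / (q+1)^(n+1) := by
    intro k hk
    simp only [Finset.mem_range] at hk
    rw [integral_const_mul, momIoo hq k]
    have hfac : (k.factorial : ℝ) ≠ 0 := by exact_mod_cast k.factorial_ne_zero
    have hpow : (q+1)^(n+1) = (q+1)^(k+1) * (q+1)^(n-k) := by
      rw [← pow_add]; congr 1; omega
    have h11 : (-1:ℝ)^k * (-1:ℝ)^k = 1 := by rw [← mul_pow]; norm_num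
    rw [lagc, hpow]
    field_simp
    linear_combination (((n.choose k : ℝ)) * (-(β+1))^k) * h11
  rw [Finset.sum_congr rfl hterm, ← Finset.sum_div, ← add_pow (-(β+1)) (q+1) n]
  ring_nf

lemma intOn_LOF2 {β : ℝ} (hβ : -1 < β) (n m : ℕ) :
    IntegrableOn (fun t => t ^ β * (LOF 0 β n t * LOF 0 β m t)) (Ioo (0:ℝ) 1) := by
  have h : (fun t : ℝ => t ^ β * (LOF 0 β n t * LOF 0 β m t))
      = fun t => ∑ k ∈ Finset.range (n+1), ∑ l ∈ Finset.range (m+1),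
          ((lagc n k * (-(β+1))^k) * (lagc m l * (-(β+1))^l))
            * (t ^ β * (Real.log t)^(k+l)) := by
    funext t
    rw [LOF_expand, LOF_expand, Finset.sum_mul_sum, Finset.mul_sum]
    refine Finset.sum_congr rfl (fun k _ => ?_)
    rw [Finset.mul_sum]
    refine Finset.sum_congr rfl (fun l _ => ?_)
    rw [pow_add]
    ring
  rw [h]
  exact integrable_finset_sum _ (fun k _ =>
    integrable_finset_sum _ (fun l _ => (momIooInt hβ (k+l)).const_mul _))

lemma orthLOF {β : ℝ} (hβ : -1 < β) (n m : ℕ) :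
    ∫ t in Ioo (0:ℝ) 1, t ^ β * (LOF 0 β n t * LOF 0 β m t)
      = (if n = m then 1 else 0) / (β+1) := by
  have hc : (0:ℝ) < β + 1 := by linarith
  have hc0 : (β+1 : ℝ) ≠ 0 := ne_of_gt hc
  have heq : ∀ t ∈ Ioo (0:ℝ) 1, t ^ β * (LOF 0 β n t * LOF 0 β m t)
      = ∑ k ∈ Finset.range (n+1), ∑ l ∈ Finset.range (m+1),
          ((lagc n k * (-(β+1))^k) * (lagc m l * (-(β+1))^l))
            * (t ^ β * (Real.log t)^(k+l)) := by
    intro t _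
    rw [LOF_expand, LOF_expand, Finset.sum_mul_sum, Finset.mul_sum]
    refine Finset.sum_congr rfl (fun k _ => ?_)
    rw [Finset.mul_sum]
    refine Finset.sum_congr rfl (fun l _ => ?_)
    rw [pow_add]
    ring
  rw [setIntegral_congr_fun measurableSet_Ioo heq,
    integral_finset_sum _ (fun k _ =>
      integrable_finset_sum _ (fun l _ => (momIooInt hβ (k+l)).const_mul _))]
  have hterm : ∀ k ∈ Finset.range (n+1),
      (∫ t in Ioo (0:ℝ) 1, ∑ l ∈ Finset.range (m+1),
          ((lagc n k * (-(β+1))^k) * (lagc m l * (-(β+1))^l))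
            * (t ^ β * (Real.log t)^(k+l)))
      = ∑ l ∈ Finset.range (m+1),
          ((-1:ℝ)^(k+l) * (n.choose k) * (m.choose l) * ((k+l).choose k)) / (β+1) := by
    intro k hk
    rw [integral_finset_sum _ (fun l _ => (momIooInt hβ (k+l)).const_mul _)]
    refine Finset.sum_congr rfl (fun l hl => ?_)
    rw [integral_const_mul, momIoo hβ (k+l)]
    have hf1 : (k.factorial : ℝ) ≠ 0 := by exact_mod_cast k.factorial_ne_zero
    have hf2 : (l.factorial : ℝ) ≠ 0 := by exact_mod_cast l.factorial_ne_zero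
    have hch : (((k+l).choose k : ℕ) : ℝ) * (k.factorial) * (l.factorial)
        = ((k+l).factorial : ℝ) := by
      have := Nat.choose_mul_factorial_mul_factorial (n := k+l) (k := k) (by omega)
      rw [Nat.add_sub_cancel_left] at this
      exact_mod_cast congrArg (fun x : ℕ => (x:ℝ)) this
    have hu : ((β+1:ℝ))^k ≠ 0 := by positivity
    have hv : ((β+1:ℝ))^l ≠ 0 := by positivity
    rw [lagc, lagc, pow_add ((-1:ℝ)) k l,
      show (-(β+1):ℝ) = (-1) * (β+1) by ring, mul_pow, mul_pow,
      show (β+1:ℝ)^(k+l+1) = (β+1)^k * ((β+1)^l * (β+1)) by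
        rw [pow_succ, pow_add]; ring, ← hch]
    rcases Nat.even_or_odd k with hek | hok <;>
      rcases Nat.even_or_odd l with hel | hol <;>
      [rw [hek.neg_one_pow, hel.neg_one_pow];
       rw [hek.neg_one_pow, hol.neg_one_pow];
       rw [hok.neg_one_pow, hel.neg_one_pow];
       rw [hok.neg_one_pow, hol.neg_one_pow]] <;>
      (field_simp)
  rw [Finset.sum_congr rfl hterm]
  have hpull : ∑ k ∈ Finset.range (n+1), ∑ l ∈ Finset.range (m+1),
      ((-1:ℝ)^(k+l) * (n.choose k) * (m.choose l) * ((k+l).choose k)) / (β+1)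
      = (∑ k ∈ Finset.range (n+1), ∑ l ∈ Finset.range (m+1),
          (-1:ℝ)^(k+l) * (n.choose k) * (m.choose l) * ((k+l).choose k)) / (β+1) := by
    rw [Finset.sum_div]
    exact Finset.sum_congr rfl (fun k _ => (Finset.sum_div _ _ _).symm)
  rw [hpull, combid]

lemma alg1 (c t s w v2 u2 : ℝ) (hc : c ≠ 0) (ht : t ≠ 0) (hv2 : v2 ≠ 0) (hwm1 : w - 1 ≠ 0)
    (hwv : w * v2 = u2) (hrel : v2 - u2 = c * t) :
    1/t - 2*(c * (1/v2)) * ((s - 1)/(w-1)) + (c * (1/v2)) * ((s-1)/(w-1)) = s/t := by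
  have h1 : (w-1)*v2 = -(c*t) := by linear_combination hwv - hrel
  have h2 : c * ((s-1)/(w-1)) / v2 = (1-s)/t := by
    have e : c * ((s-1)/(w-1)) / v2 = (c*(s-1))/((w-1)*v2) := by
      field_simp
    rw [e, h1]
    rw [div_neg, neg_eq_iff_eq_neg, ← neg_div, ← div_div, mul_div_assoc]
    field_simp
    ring
  linear_combination -h2

lemma errval (r β : ℝ) (hr : 0 ≤ r) (hβ : -1 < β) (N : ℕ) :
    ∫ t in Ioo (0:ℝ) 1, (t ^ r - glofProj0 β N (fun x => x ^ r) t)^2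
      = (((r - β/2)/(r + β/2 + 1))^2)^(N+1) / (2*r+1) := by
  have hc : (0:ℝ) < β + 1 := by linarith
  have hq0 : -1 < r + β/2 := by linarith
  have h2r : -1 < 2*r := by linarith
  have hv : (0:ℝ) < r + β/2 + 1 := by linarith
  have hv0 : (r + β/2 + 1 : ℝ) ≠ 0 := ne_of_gt hv
  set u : ℝ := r - β/2 with hu
  set v : ℝ := r + β/2 + 1 with hvdef
  set b : ℕ → ℝ := fun n => ∫ x in Ioo (0:ℝ) 1, x ^ r * GLOF 0 β 0 n x with hbdef
  set G : ℕ → ℝ → ℝ := fun n t => GLOF 0 β 0 n t with hGdef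
  -- pointwise facts on Ioo
  have hGL : ∀ n, ∀ t ∈ Ioo (0:ℝ) 1, t ^ r * G n t = t ^ (r + β/2) * LOF 0 β n t := by
    intro n t ht
    rw [hGdef]
    simp only [GLOF]
    rw [show (β - 0)/2 = β/2 by ring, ← mul_assoc, ← Real.rpow_add ht.1]
  have hGG : ∀ n m, ∀ t ∈ Ioo (0:ℝ) 1,
      G n t * G m t = t ^ β * (LOF 0 β n t * LOF 0 β m t) := by
    intro n m t ht
    rw [hGdef]
    simp only [GLOF]
    rw [show (β - 0)/2 = β/2 by ring]
    rw [show t ^ (β/2) * LOF 0 β n t * (t ^ (β/2) * LOF 0 β m t)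
        = (t ^ (β/2) * t ^ (β/2)) * (LOF 0 β n t * LOF 0 β m t) by ring,
      ← Real.rpow_add ht.1]
    norm_num
  have hsq : ∀ t ∈ Ioo (0:ℝ) 1, (t ^ r)^2 = t ^ (2*r) * (Real.log t)^0 := by
    intro t ht
    rw [pow_zero, mul_one, sq, ← Real.rpow_add ht.1]
    norm_num
    ring_nf
  -- integrability
  have hint1 : IntegrableOn (fun t => (t ^ r)^2) (Ioo (0:ℝ) 1) :=
    (momIooInt h2r 0).congr_fun (fun t ht => ((hsq t ht).symm)) measurableSet_Ioo
  have hint2 : ∀ n, IntegrableOn (fun t => t ^ r * G n t) (Ioo (0:ℝ) 1) := fun n =>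
    (intOn_rpow_LOF hq0 n).congr_fun (fun t ht => (hGL n t ht).symm) measurableSet_Ioo
  have hint3 : ∀ n m, IntegrableOn (fun t => G n t * G m t) (Ioo (0:ℝ) 1) := fun n m =>
    (intOn_LOF2 hβ n m).congr_fun (fun t ht => (hGG n m t ht).symm) measurableSet_Ioo
  -- values
  have hval1 : ∫ t in Ioo (0:ℝ) 1, (t ^ r)^2 = 1 / (2*r+1) := by
    rw [setIntegral_congr_fun measurableSet_Ioo hsq, momIoo h2r 0]
    norm_num
  have hb : ∀ n, b n = u^n / v^(n+1) := by
    intro n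
    rw [hbdef]
    simp only
    rw [setIntegral_congr_fun measurableSet_Ioo (hGL n), int_rpow_LOF hq0 n]
    rw [show r + β/2 - β = u by rw [hu]; ring, show r + β/2 + 1 = v from rfl]
  have hval3 : ∀ n m, ∫ t in Ioo (0:ℝ) 1, G n t * G m t
      = (if n = m then 1 else 0) / (β+1) := by
    intro n m
    rw [setIntegral_congr_fun measurableSet_Ioo (hGG n m), orthLOF hβ n m]
  -- expansion
  have hP : ∀ t, glofProj0 β N (fun x => x ^ r) t
      = ∑ n ∈ Finset.range (N+1), ((β+1) * b n) * G n t := by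
    intro t
    rfl
  have hexp : ∀ t, (t ^ r - glofProj0 β N (fun x => x ^ r) t)^2
      = ((t ^ r)^2 - ∑ n ∈ Finset.range (N+1), (2*((β+1) * b n)) * (t ^ r * G n t))
        + ∑ n ∈ Finset.range (N+1), ∑ m ∈ Finset.range (N+1),
            (((β+1) * b n) * ((β+1) * b m)) * (G n t * G m t) := by
    intro t
    rw [hP]
    have e1 : t ^ r * (∑ n ∈ Finset.range (N+1), ((β+1) * b n) * G n t)
        = ∑ n ∈ Finset.range (N+1), ((β+1) * b n) * (t ^ r * G n t) := by
      rw [Finset.mul_sum]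
      exact Finset.sum_congr rfl (fun n _ => by ring)
    have e2 : (∑ n ∈ Finset.range (N+1), ((β+1) * b n) * G n t)
          * (∑ m ∈ Finset.range (N+1), ((β+1) * b m) * G m t)
        = ∑ n ∈ Finset.range (N+1), ∑ m ∈ Finset.range (N+1),
            (((β+1) * b n) * ((β+1) * b m)) * (G n t * G m t) := by
      rw [Finset.sum_mul_sum]
      exact Finset.sum_congr rfl (fun n _ => Finset.sum_congr rfl (fun m _ => by ring))
    have e3 : ∑ n ∈ Finset.range (N+1), (2*((β+1) * b n)) * (t ^ r * G n t)
        = 2 * ∑ n ∈ Finset.range (N+1), ((β+1) * b n) * (t ^ r * G n t) := by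
      rw [Finset.mul_sum]
      exact Finset.sum_congr rfl (fun n _ => by ring)
    rw [e3, ← e1, ← e2]
    ring
  rw [show (fun t => (t ^ r - glofProj0 β N (fun x => x ^ r) t)^2) = _ from funext hexp]
  have hintY : IntegrableOn (fun t => ∑ n ∈ Finset.range (N+1),
      (2*((β+1) * b n)) * (t ^ r * G n t)) (Ioo (0:ℝ) 1) :=
    integrable_finset_sum _ (fun n _ => (hint2 n).const_mul _)
  have hintZ : IntegrableOn (fun t => ∑ n ∈ Finset.range (N+1), ∑ m ∈ Finset.range (N+1),
      (((β+1) * b n) * ((β+1) * b m)) * (G n t * G m t)) (Ioo (0:ℝ) 1) :=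
    integrable_finset_sum _ (fun n _ =>
      integrable_finset_sum _ (fun m _ => (hint3 n m).const_mul _))
  have hintXY : IntegrableOn (fun t => (t ^ r)^2 - ∑ n ∈ Finset.range (N+1),
      (2*((β+1) * b n)) * (t ^ r * G n t)) (Ioo (0:ℝ) 1) := hint1.sub hintY
  rw [integral_add hintXY hintZ, integral_sub hint1 hintY, hval1,
    integral_finset_sum _ (fun n _ => (hint2 n).const_mul _),
    integral_finset_sum _ (fun n _ =>
      integrable_finset_sum _ (fun m _ => (hint3 n m).const_mul _))]
  have hYv : ∀ n ∈ Finset.range (N+1),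
      (∫ t in Ioo (0:ℝ) 1, (2*((β+1) * b n)) * (t ^ r * G n t))
        = (2*(β+1)) * (b n)^2 := by
    intro n _
    rw [integral_const_mul]
    rw [show (∫ t in Ioo (0:ℝ) 1, t ^ r * G n t) = b n from rfl]
    ring
  have hZv : ∀ n ∈ Finset.range (N+1),
      (∫ t in Ioo (0:ℝ) 1, ∑ m ∈ Finset.range (N+1),
        (((β+1) * b n) * ((β+1) * b m)) * (G n t * G m t))
      = ∑ m ∈ Finset.range (N+1),
          (((β+1) * b n) * ((β+1) * b m)) * ((if n = m then 1 else 0) / (β+1)) := by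
    intro n _
    rw [integral_finset_sum _ (fun m _ => (hint3 n m).const_mul _)]
    exact Finset.sum_congr rfl (fun m _ => by rw [integral_const_mul, hval3 n m])
  rw [Finset.sum_congr rfl hYv, Finset.sum_congr rfl hZv]
  have hZs : ∑ n ∈ Finset.range (N+1), ∑ m ∈ Finset.range (N+1),
      (((β+1) * b n) * ((β+1) * b m)) * ((if n = m then 1 else 0) / (β+1))
      = ∑ n ∈ Finset.range (N+1), (β+1) * (b n)^2 := by
    refine Finset.sum_congr rfl (fun n hn => ?_)
    rw [Finset.sum_eq_single n]
    · rw [if_pos rfl]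
      field_simp
    · intro m _ hm
      rw [if_neg (fun h => hm h.symm)]
      simp
    · intro h
      exact absurd hn h
  rw [hZs]
  -- now pure algebra
  set w : ℝ := (u/v)^2 with hw
  have husq : u^2 < v^2 := by
    rw [hu, hvdef]
    nlinarith [mul_pos hc (by linarith : (0:ℝ) < 2*r+1)]
  have hv2 : (v^2 : ℝ) ≠ 0 := by positivity
  have hwlt : w < 1 := by
    rw [hw, div_pow]
    rw [div_lt_one (by positivity)]
    exact husq
  have hw1 : w ≠ 1 := ne_of_lt hwlt
  have hbsq : ∀ n : ℕ, (b n)^2 = w^n * (1/v^2) := by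
    intro n
    rw [hb n, hw, div_pow, div_pow, div_pow, ← pow_mul u, ← pow_mul u, ← pow_mul v,
      ← pow_mul v, show (n+1)*2 = n*2+2 from by ring, pow_add v (n*2) 2,
      show 2*n = n*2 from by ring, div_mul_div_comm, mul_one]
  have hsum1 : ∑ n ∈ Finset.range (N+1), (β+1) * (b n)^2
      = ((β+1) * (1/v^2)) * ∑ n ∈ Finset.range (N+1), w^n := by
    rw [Finset.mul_sum]
    exact Finset.sum_congr rfl (fun n _ => by rw [hbsq n]; ring)
  have hsum2 : ∑ n ∈ Finset.range (N+1), (2*(β+1)) * (b n)^2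
      = (2*((β+1) * (1/v^2))) * ∑ n ∈ Finset.range (N+1), w^n := by
    rw [Finset.mul_sum]
    exact Finset.sum_congr rfl (fun n _ => by rw [hbsq n]; ring)
  rw [hsum1, hsum2, geom_sum_eq hw1]
  have hwv : w * v^2 = u^2 := by
    rw [hw, div_pow]
    exact div_mul_cancel₀ _ hv2
  have hrel : v^2 - u^2 = (β+1)*(2*r+1) := by
    rw [hu, hvdef]
    ring
  have h2r1 : (2*r+1 : ℝ) ≠ 0 := by positivity
  have hwm1 : w - 1 ≠ 0 := sub_ne_zero.mpr hw1
  have goal' : 1/(2*r+1) - 2*((β+1) * (1/v^2)) * ((w^(N+1) - 1)/(w-1))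
      + ((β+1) * (1/v^2)) * ((w^(N+1) - 1)/(w-1)) = w^(N+1)/(2*r+1) :=
    alg1 (β+1) (2*r+1) (w^(N+1)) w (v^2) (u^2) (ne_of_gt hc) h2r1 hv2 hwm1 hwv hrel
  linarith [goal']

lemma sqrt_bound (x t C : ℝ) (hx1 : |x| < 1) (ht : 1 ≤ t) (hC : 1 ≤ C) (N : ℕ) :
    Real.sqrt ((x^2)^(N+1)/t) ≤ Real.sqrt C * |x|^N := by
  calc Real.sqrt ((x^2)^(N+1)/t)
      = Real.sqrt ((x^2)^(N+1)) / Real.sqrt t := Real.sqrt_div (by positivity) _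
    _ = |x|^(N+1) / Real.sqrt t := by
        rw [show (x^2)^(N+1) = (x^(N+1))^2 by ring, Real.sqrt_sq_eq_abs, abs_pow]
    _ ≤ |x|^(N+1) := by
        apply div_le_self (by positivity)
        rw [Real.one_le_sqrt]
        linarith
    _ ≤ |x|^N := by
        rw [pow_succ]
        exact mul_le_of_le_one_right (by positivity) hx1.le
    _ ≤ Real.sqrt C * |x|^N := by
        refine le_mul_of_one_le_left (by positivity) ?_
        rw [Real.one_le_sqrt]
        exact hC

/-- Exponential `L²` convergence of the GLOF projection for `f(t) = t^r`. -/
theorem glof_projection_power_L2 (r β : ℝ) (hr : 0 ≤ r) (hβ : -1 < β) :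
    ∃ N₀ : ℕ, ∀ N ≥ N₀,
      Real.sqrt (∫ t in Set.Ioo (0:ℝ) 1,
          (t ^ r - glofProj0 β N (fun x => x ^ r) t)^2)
        ≤ Real.sqrt (2*(β + 1)*(N:ℝ)) * |(2*r - β)/(2*r + β + 2)| ^ N := by
  have hc : (0:ℝ) < β + 1 := by linarith
  refine ⟨⌈1/(2*(β+1))⌉₊ + 1, fun N hN => ?_⟩
  have hv : (0:ℝ) < r + β/2 + 1 := by linarith
  have hρ : (2*r - β)/(2*r + β + 2) = (r - β/2)/(r + β/2 + 1) := by
    rw [div_eq_div_iff (by linarith) (by linarith)]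
    ring
  rw [errval r β hr hβ N, ← hρ]
  have hx1 : |(2*r - β)/(2*r + β + 2)| < 1 := by
    rw [hρ, abs_div, abs_of_pos hv, div_lt_one hv, abs_lt]
    constructor <;> linarith
  have hC : (1:ℝ) ≤ 2*(β+1)*(N:ℝ) := by
    have h1 : 1/(2*(β+1)) ≤ (N:ℝ) := by
      calc 1/(2*(β+1)) ≤ (⌈1/(2*(β+1))⌉₊ : ℝ) := Nat.le_ceil _
        _ ≤ (N:ℝ) := by
            have h2 : ⌈1/(2*(β+1))⌉₊ ≤ N := by omega
            exact_mod_cast h2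
    rw [div_le_iff₀ (by positivity)] at h1
    nlinarith [h1]
  exact sqrt_bound _ (2*r+1) _ hx1 (by linarith) hC N
end
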